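/- Let m, n be positive integers and P₂(ζ) = Σ_{j=1}^n ζⱼ², viewed as a polynomial on ℂⁿ. There exists C > 0 such that for all τ ∈ ℝ, η ∈ ℝ and ξ ∈ ℝⁿ: |−iη + P₂^m(ξ − iτeₙ)|² + τ² |(∂ₙ P₂^m)(ξ − iτeₙ)|² + τ^{2m} |(∂ₙ^m P₂^m)(ξ − iτeₙ)|² ≥ C ( |η|² + |ξ − iτeₙ|^{4m} ). -/

import Mathlib

noncomputable section

/-- The polynomial `P₂(ζ) = Σⱼ ζⱼ²`. -/
def P₂ (n : ℕ) : MvPolynomial (Fin n) ℂ := ∑ j, MvPolynomial.X j ^ 2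

/-- The last coordinate index of `Fin n`. -/
def lastI (n : ℕ) (hn : 0 < n) : Fin n := ⟨n - 1, Nat.sub_lt hn one_pos⟩

/-- The complex point `ξ − iτeₙ ∈ ℂⁿ`. -/
def evalPt {n : ℕ} (hn : 0 < n) (ξ : Fin n → ℝ) (τ : ℝ) : Fin n → ℂ :=
  fun j => (ξ j : ℂ) - if j = lastI n hn then Complex.I * (τ : ℂ) else 0

end

open MvPolynomial

section Aux

/-- A homogeneous polynomial scales under scalar dilation of the point. -/
lemma homog_eval_scale {σ : Type*} {Q : MvPolynomial σ ℂ} {d : ℕ}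
    (h : Q.IsHomogeneous d) (c : ℂ) (x : σ → ℂ) :
    MvPolynomial.eval (fun i => c * x i) Q = c ^ d * MvPolynomial.eval x Q := by
  classical
  conv_lhs => rw [Q.as_sum]
  conv_rhs => rw [Q.as_sum]
  rw [map_sum, map_sum, Finset.mul_sum]
  apply Finset.sum_congr rfl
  intro v hv
  rw [eval_monomial, eval_monomial]
  have hvd : v.degree = d := by
    have := h (MvPolynomial.mem_support_iff.mp hv)
    rw [Finsupp.degree_eq_weight_one]; exact this
  have : (v.prod fun i e => (c * x i) ^ e) = c ^ d * v.prod fun i e => x i ^ e := by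
    rw [Finsupp.prod, Finsupp.prod, ← hvd, Finsupp.degree_apply, ← Finset.prod_pow_eq_pow_sum,
      ← Finset.prod_mul_distrib]
    exact Finset.prod_congr rfl fun i _ => mul_pow _ _ _
  rw [this]
  ring

/-- The partial derivative of a homogeneous polynomial is homogeneous. -/
lemma isHomogeneous_pderiv {σ : Type*} {Q : MvPolynomial σ ℂ} {d : ℕ}
    (h : Q.IsHomogeneous (d + 1)) (i : σ) :
    (MvPolynomial.pderiv i Q).IsHomogeneous d := by
  classical
  rw [Q.as_sum, map_sum]
  apply MvPolynomial.IsHomogeneous.sum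
  intro v hv
  rw [pderiv_monomial]
  rcases eq_or_ne (v i) 0 with h0 | h0
  · rw [h0]
    simpa using isHomogeneous_zero σ ℂ d
  · apply isHomogeneous_monomial
    have hvd : v.degree = d + 1 := by
      have := h (MvPolynomial.mem_support_iff.mp hv)
      rw [Finsupp.degree_eq_weight_one]; exact this
    have hle : Finsupp.single i 1 ≤ v := by
      rw [Finsupp.single_le_iff]; omega
    have hsum : (v - Finsupp.single i 1) + Finsupp.single i 1 = v :=
      tsub_add_cancel_of_le hle
    have hdeg : (v - Finsupp.single i 1).degree + (Finsupp.single i 1).degree = v.degree := by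
      rw [Finsupp.degree_eq_weight_one, ← map_add, hsum]
    have hs1 : (Finsupp.single i 1).degree = 1 := by
      rw [Finsupp.degree_apply, Finsupp.support_single_ne_zero _ one_ne_zero, Finset.sum_singleton,
        Finsupp.single_eq_same]
    omega

lemma homog_P₂ (n : ℕ) : (P₂ n).IsHomogeneous 2 := by
  rw [P₂]
  exact MvPolynomial.IsHomogeneous.sum _ _ _ fun j _ => isHomogeneous_X_pow j 2

lemma pd_P₂ (n : ℕ) (hn : 0 < n) :
    pderiv (lastI n hn) (P₂ n) = 2 * X (lastI n hn) := by
  rw [P₂, map_sum]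
  rw [Finset.sum_eq_single (lastI n hn)]
  · rw [Derivation.leibniz_pow, pderiv_X_self]
    simp [two_smul, two_mul]
  · intro j _ hj
    rw [Derivation.leibniz_pow, pderiv_X_of_ne hj]
    simp
  · simp

lemma homog_iter (m n k : ℕ) (hn : 0 < n) (hm : 0 < m) (hk : k ≤ m) :
    (((fun Q => pderiv (lastI n hn) Q)^[k]) (P₂ n ^ m)).IsHomogeneous (2 * m - k) := by
  induction k with
  | zero => simpa using (homog_P₂ n).pow m
  | succ k ih =>
    rw [Function.iterate_succ_apply']
    have h1 : 2 * m - k = (2 * m - (k + 1)) + 1 := by omega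
    exact isHomogeneous_pderiv (h1 ▸ ih (by omega)) _

/-- Coefficients in the iterated-derivative formula. -/
def cc (m : ℕ) : ℕ → ℕ
  | 0 => 1
  | (k + 1) => 2 * (m - k) * cc m k

lemma cc_pos {m k : ℕ} (hk : k ≤ m) : 0 < cc m k := by
  induction k with
  | zero => simp [cc]
  | succ k ih =>
    have h1 : 0 < cc m k := ih (by omega)
    have : 0 < m - k := by omega
    simp only [cc]
    positivity

lemma deriv_iter_formula (m n k : ℕ) (hn : 0 < n) (hk : k ≤ m) :
    ∃ G : MvPolynomial (Fin n) ℂ,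
      (fun Q => pderiv (lastI n hn) Q)^[k] (P₂ n ^ m)
        = (cc m k : MvPolynomial (Fin n) ℂ) * (P₂ n ^ (m - k) * X (lastI n hn) ^ k)
          + P₂ n ^ (m - k + 1) * G := by
  induction k with
  | zero => exact ⟨0, by simp [cc]⟩
  | succ k ih =>
    obtain ⟨G, hG⟩ := ih (by omega)
    obtain ⟨j, hj⟩ : ∃ j, m = k + 1 + j := ⟨m - (k + 1), by omega⟩
    set L := lastI n hn
    refine ⟨(cc m k : MvPolynomial (Fin n) ℂ) * pderiv L (X L ^ k)
      + ((2 * (j + 2) : ℕ) : MvPolynomial (Fin n) ℂ) * (X L * G) + P₂ n * pderiv L G, ?_⟩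
    have h1 : m - k = j + 1 := by omega
    have h3 : m - (k + 1) = j := by omega
    have hpd : pderiv L (P₂ n) = 2 * X L := pd_P₂ n hn
    have h4 : (cc m (k + 1) : MvPolynomial (Fin n) ℂ) = 2 * (j + 1) * (cc m k : ℕ) := by
      have : cc m (k + 1) = 2 * (m - k) * cc m k := rfl
      rw [this, h1]
      push_cast
      ring
    simp only [Function.iterate_succ_apply', hG, h1, h3, h4, map_add, Derivation.leibniz,
      Derivation.leibniz_pow, hpd, Derivation.map_natCast, smul_eq_mul,
      Nat.add_sub_cancel]
    push_cast
    ring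

lemma evalPt_mul {n : ℕ} (hn : 0 < n) (ξ : Fin n → ℝ) (τ μ : ℝ) :
    evalPt hn (fun j => μ * ξ j) (μ * τ) = fun i => (μ : ℂ) * evalPt hn ξ τ i := by
  funext i
  simp only [evalPt]
  split_ifs with h
  · push_cast; ring
  · push_cast; ring

lemma norm_eval_mul_of_homog {n d : ℕ} (hn : 0 < n) {Q : MvPolynomial (Fin n) ℂ}
    (hQ : Q.IsHomogeneous d) (ξ : Fin n → ℝ) (τ μ : ℝ) (hμ : 0 ≤ μ) :
    ‖MvPolynomial.eval (evalPt hn (fun j => μ * ξ j) (μ * τ)) Q‖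
      = μ ^ d * ‖MvPolynomial.eval (evalPt hn ξ τ) Q‖ := by
  rw [evalPt_mul hn ξ τ μ, homog_eval_scale hQ, norm_mul, norm_pow, Complex.norm_real,
    Real.norm_of_nonneg hμ]

end Aux

/-- The symbol estimate (3.8): ellipticity of the conjugated symbol. -/
theorem symbol_lower_bound
    (m n : ℕ) (hm : 0 < m) (hn : 0 < n) :
    ∃ C > (0 : ℝ), ∀ (τ η : ℝ) (ξ : Fin n → ℝ),
      ‖-Complex.I * (η : ℂ) + MvPolynomial.eval (evalPt hn ξ τ) (P₂ n ^ m)‖ ^ 2 +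
        τ ^ 2 * ‖MvPolynomial.eval (evalPt hn ξ τ)
          (MvPolynomial.pderiv (lastI n hn) (P₂ n ^ m))‖ ^ 2 +
        τ ^ (2 * m) * ‖MvPolynomial.eval (evalPt hn ξ τ)
          ((fun Q => MvPolynomial.pderiv (lastI n hn) Q)^[m] (P₂ n ^ m))‖ ^ 2 ≥
      C * (η ^ 2 + ((∑ j, ξ j ^ 2) + τ ^ 2) ^ (2 * m)) := by
  classical
  set Q1 : MvPolynomial (Fin n) ℂ := MvPolynomial.pderiv (lastI n hn) (P₂ n ^ m) with hQ1def
  set Qm : MvPolynomial (Fin n) ℂ :=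
    (fun Q => MvPolynomial.pderiv (lastI n hn) Q)^[m] (P₂ n ^ m) with hQmdef
  have hQ0h : (P₂ n ^ m).IsHomogeneous (2 * m) := by
    simpa [mul_comm] using (homog_P₂ n).pow m
  have hQ1h : Q1.IsHomogeneous (2 * m - 1) := by
    have := homog_iter m n 1 hn hm (by omega)
    rwa [Function.iterate_one] at this
  have hQmh : Qm.IsHomogeneous (2 * m - m) := homog_iter m n m hn hm le_rfl
  -- the functions
  set Φ : ℝ × ℝ × (Fin n → ℝ) → ℝ := fun p =>
    ‖-Complex.I * (p.2.1 : ℂ) + MvPolynomial.eval (evalPt hn p.2.2 p.1) (P₂ n ^ m)‖ ^ 2 +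
      p.1 ^ 2 * ‖MvPolynomial.eval (evalPt hn p.2.2 p.1) Q1‖ ^ 2 +
      p.1 ^ (2 * m) * ‖MvPolynomial.eval (evalPt hn p.2.2 p.1) Qm‖ ^ 2 with hΦdef
  set Ψ : ℝ × ℝ × (Fin n → ℝ) → ℝ := fun p =>
    p.2.1 ^ 2 + ((∑ j, p.2.2 j ^ 2) + p.1 ^ 2) ^ (2 * m) with hΨdef
  have hΦ0 : ∀ p, 0 ≤ Φ p := by
    intro p
    simp only [hΦdef]
    rw [pow_mul]
    positivity
  -- continuity
  have hzc : Continuous fun p : ℝ × ℝ × (Fin n → ℝ) => evalPt hn p.2.2 p.1 := by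
    apply continuous_pi
    intro i
    simp only [evalPt]
    apply Continuous.sub
    · exact Complex.continuous_ofReal.comp
        ((continuous_apply i).comp (continuous_snd.comp continuous_snd))
    · split_ifs with h
      · exact continuous_const.mul (Complex.continuous_ofReal.comp continuous_fst)
      · exact continuous_const
  have hec : ∀ Q : MvPolynomial (Fin n) ℂ,
      Continuous fun p : ℝ × ℝ × (Fin n → ℝ) => MvPolynomial.eval (evalPt hn p.2.2 p.1) Q :=
    fun Q => (MvPolynomial.continuous_eval Q).comp hzc
  have hΦc : Continuous Φ := by
    apply Continuous.add
    apply Continuous.add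
    · exact (((continuous_const.mul (Complex.continuous_ofReal.comp
        (continuous_fst.comp continuous_snd))).add (hec (P₂ n ^ m))).norm.pow 2)
    · exact (continuous_fst.pow 2).mul ((hec Q1).norm.pow 2)
    · exact (continuous_fst.pow (2 * m)).mul ((hec Qm).norm.pow 2)
  have hΨc : Continuous Ψ := by
    apply Continuous.add
    · exact ((continuous_fst.comp continuous_snd).pow 2)
    · exact (((continuous_finset_sum _ fun j _ =>
        ((continuous_apply j).comp (continuous_snd.comp continuous_snd)).pow 2).add
        (continuous_fst.pow 2)).pow (2 * m))
  -- positivity on the unit sphere of Ψ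
  have hpos : ∀ p : ℝ × ℝ × (Fin n → ℝ), Ψ p = 1 → 0 < Φ p := by
    rintro ⟨τ, η, ξ⟩ hp
    have hp' : η ^ 2 + ((∑ j, ξ j ^ 2) + τ ^ 2) ^ (2 * m) = 1 := hp
    refine lt_of_le_of_ne (hΦ0 _) fun h0 => ?_
    set z := evalPt hn ξ τ with hzdef
    have h0' : (0 : ℝ) = ‖-Complex.I * (η : ℂ) + MvPolynomial.eval z (P₂ n ^ m)‖ ^ 2 +
        τ ^ 2 * ‖MvPolynomial.eval z Q1‖ ^ 2 +
        τ ^ (2 * m) * ‖MvPolynomial.eval z Qm‖ ^ 2 := h0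
    have a1 : (0 : ℝ) ≤ ‖-Complex.I * (η : ℂ) + MvPolynomial.eval z (P₂ n ^ m)‖ ^ 2 := by
      positivity
    have a2 : (0 : ℝ) ≤ τ ^ 2 * ‖MvPolynomial.eval z Q1‖ ^ 2 := by positivity
    have a3 : (0 : ℝ) ≤ τ ^ (2 * m) * ‖MvPolynomial.eval z Qm‖ ^ 2 := by
      rw [pow_mul]
      positivity
    have e1 : -Complex.I * (η : ℂ) + MvPolynomial.eval z (P₂ n ^ m) = 0 := by
      have : ‖-Complex.I * (η : ℂ) + MvPolynomial.eval z (P₂ n ^ m)‖ ^ 2 = 0 := by linarith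
      have := (pow_eq_zero_iff two_ne_zero).mp this
      rwa [norm_eq_zero] at this
    by_cases hτ : τ = 0
    · subst hτ
      have hzz : z = fun j => ((ξ j : ℝ) : ℂ) := by
        funext j
        simp [hzdef, evalPt]
      have hA : MvPolynomial.eval z (P₂ n ^ m) = (((∑ j, ξ j ^ 2) ^ m : ℝ) : ℂ) := by
        rw [map_pow]
        have : MvPolynomial.eval z (P₂ n) = ((∑ j, ξ j ^ 2 : ℝ) : ℂ) := by
          rw [hzz, P₂, map_sum]
          push_cast
          simp
        rw [this]
        push_cast
        ring
      rw [hA] at e1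
      have h1 : (((∑ j, ξ j ^ 2) ^ m : ℝ) : ℂ) = Complex.I * (η : ℂ) := by
        linear_combination e1
      have hre : (∑ j, ξ j ^ 2) ^ m = 0 := by
        have := congrArg Complex.re h1
        simpa only [Complex.ofReal_re, Complex.mul_re, Complex.I_re, Complex.I_im,
          Complex.ofReal_im, zero_mul, one_mul, mul_zero, sub_zero, zero_sub,
          neg_eq_zero] using this
      have him : η = 0 := by
        have := congrArg Complex.im h1
        simpa only [Complex.ofReal_im, Complex.mul_im, Complex.I_re, Complex.I_im,
          Complex.ofReal_re, zero_mul, one_mul, mul_zero, add_zero, zero_add,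
          eq_comm] using this
      have hs0 : (∑ j, ξ j ^ 2) = 0 := (pow_eq_zero_iff hm.ne').mp hre
      rw [him, hs0] at hp'
      norm_num [zero_pow (by omega : 2 * m ≠ 0)] at hp'
    · -- τ ≠ 0
      have hw : z (lastI n hn) = (ξ (lastI n hn) : ℂ) - Complex.I * (τ : ℂ) := by
        simp [hzdef, evalPt]
      have hwne : z (lastI n hn) ≠ 0 := by
        rw [hw]
        intro hc
        have := congrArg Complex.im hc
        simp at this
        exact hτ this
      have e2 : MvPolynomial.eval z Q1 = 0 := by
        have h2 : τ ^ 2 * ‖MvPolynomial.eval z Q1‖ ^ 2 = 0 := by linarith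
        rcases mul_eq_zero.mp h2 with h | h
        · exact absurd ((pow_eq_zero_iff two_ne_zero).mp h) hτ
        · rw [← norm_eq_zero]
          exact (pow_eq_zero_iff two_ne_zero).mp h
      have e3 : MvPolynomial.eval z Qm = 0 := by
        have h3 : τ ^ (2 * m) * ‖MvPolynomial.eval z Qm‖ ^ 2 = 0 := by linarith
        rcases mul_eq_zero.mp h3 with h | h
        · exact absurd ((pow_eq_zero_iff (by omega : 2 * m ≠ 0)).mp h) hτ
        · rw [← norm_eq_zero]
          exact (pow_eq_zero_iff two_ne_zero).mp h
      have hQ1e : MvPolynomial.eval z Q1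
          = (m : ℂ) * ((MvPolynomial.eval z (P₂ n)) ^ (m - 1) * (2 * z (lastI n hn))) := by
        rw [hQ1def, Derivation.leibniz_pow, pd_P₂ n hn]
        simp only [smul_eq_mul, nsmul_eq_mul, map_mul, map_pow, map_natCast, map_ofNat, eval_X]
      rw [hQ1e] at e2
      have hmC : (m : ℂ) ≠ 0 := Nat.cast_ne_zero.mpr hm.ne'
      have e2' : (MvPolynomial.eval z (P₂ n)) ^ (m - 1) = 0 := by
        rcases mul_eq_zero.mp e2 with h | h
        · exact absurd h hmC
        rcases mul_eq_zero.mp h with h | h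
        · exact h
        rcases mul_eq_zero.mp h with h | h
        · exact absurd h two_ne_zero
        · exact absurd h hwne
      rcases Nat.lt_or_ge m 2 with hm2 | hm2
      · have hm1 : m = 1 := by omega
        rw [hm1] at e2'
        simp at e2'
      · have hA0 : MvPolynomial.eval z (P₂ n) = 0 :=
          (pow_eq_zero_iff (by omega : m - 1 ≠ 0)).mp e2'
        obtain ⟨G, hG⟩ := deriv_iter_formula m n m hn le_rfl
        have hQme : MvPolynomial.eval z Qm = (cc m m : ℂ) * (z (lastI n hn)) ^ m := by
          rw [hQmdef, hG]
          simp [Nat.sub_self, map_add, map_mul, map_pow, hA0, map_natCast]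
        rw [hQme] at e3
        have hccC : (cc m m : ℂ) ≠ 0 := Nat.cast_ne_zero.mpr (cc_pos le_rfl).ne'
        rcases mul_eq_zero.mp e3 with h | h
        · exact absurd h hccC
        · exact hwne ((pow_eq_zero_iff hm.ne').mp h)
  -- compactness of the unit sphere of Ψ
  have hssub : {p : ℝ × ℝ × (Fin n → ℝ) | Ψ p = 1} ⊆ Metric.closedBall 0 1 := by
    rintro ⟨τ, η, ξ⟩ hp
    have hp' : η ^ 2 + ((∑ j, ξ j ^ 2) + τ ^ 2) ^ (2 * m) = 1 := hp
    have hs0 : (0 : ℝ) ≤ ∑ j, ξ j ^ 2 := by positivity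
    have hb : (∑ j, ξ j ^ 2) + τ ^ 2 ≤ 1 := by
      by_contra hc
      push_neg at hc
      have h1 : (1 : ℝ) < ((∑ j, ξ j ^ 2) + τ ^ 2) ^ (2 * m) :=
        one_lt_pow₀ hc (by omega)
      nlinarith [sq_nonneg η]
    have hη2 : η ^ 2 ≤ 1 := by
      nlinarith [pow_nonneg (by positivity : (0:ℝ) ≤ (∑ j, ξ j ^ 2) + τ ^ 2) (2 * m)]
    rw [Metric.mem_closedBall, dist_zero_right]
    rw [Prod.norm_def, Prod.norm_def]
    have hτ1 : ‖τ‖ ≤ 1 := by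
      rw [Real.norm_eq_abs]
      nlinarith [abs_nonneg τ, sq_abs τ]
    have hη1 : ‖η‖ ≤ 1 := by
      rw [Real.norm_eq_abs]
      nlinarith [abs_nonneg η, sq_abs η]
    have hξ1 : ‖ξ‖ ≤ 1 := by
      rw [pi_norm_le_iff_of_nonneg zero_le_one]
      intro j
      rw [Real.norm_eq_abs]
      have : ξ j ^ 2 ≤ ∑ i, ξ i ^ 2 :=
        Finset.single_le_sum (fun i _ => sq_nonneg (ξ i)) (Finset.mem_univ j)
      nlinarith [abs_nonneg (ξ j), sq_abs (ξ j)]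
    simp only [sup_le_iff]
    exact ⟨hτ1, hη1, hξ1⟩
  have hSclosed : IsClosed {p : ℝ × ℝ × (Fin n → ℝ) | Ψ p = 1} :=
    isClosed_eq hΨc continuous_const
  have hScompact : IsCompact {p : ℝ × ℝ × (Fin n → ℝ) | Ψ p = 1} :=
    (isCompact_closedBall (0 : ℝ × ℝ × (Fin n → ℝ)) 1).of_isClosed_subset hSclosed hssub
  have hSne : Set.Nonempty {p : ℝ × ℝ × (Fin n → ℝ) | Ψ p = 1} := by
    refine ⟨(0, 1, 0), ?_⟩
    show (1 : ℝ) ^ 2 + ((∑ j : Fin n, (0:ℝ) ^ 2) + (0:ℝ) ^ 2) ^ (2 * m) = 1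
    have hz : ((∑ j : Fin n, (0:ℝ) ^ 2) + (0:ℝ) ^ 2) = 0 := by simp
    rw [hz, zero_pow (by omega : 2 * m ≠ 0)]
    norm_num
  obtain ⟨pmin, hpminS, hminOn⟩ := hScompact.exists_isMinOn hSne hΦc.continuousOn
  refine ⟨Φ pmin, hpos _ hpminS, ?_⟩
  intro τ η ξ
  -- scaling identities
  have hscaleΦ : ∀ (μ τ' η' : ℝ) (ξ' : Fin n → ℝ), 0 ≤ μ →
      Φ (μ * τ', μ ^ (2 * m) * η', fun j => μ * ξ' j) = μ ^ (4 * m) * Φ (τ', η', ξ') := by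
    intro μ τ' η' ξ' hμ
    have key1 : (μ ^ (2 * m)) ^ 2 = μ ^ (4 * m) := by
      rw [← pow_mul]
      congr 1
      omega
    have key2 : μ ^ 2 * μ ^ ((2 * m - 1) * 2) = μ ^ (4 * m) := by
      rw [← pow_add]
      congr 1
      omega
    have key3 : μ ^ (2 * m) * μ ^ ((2 * m - m) * 2) = μ ^ (4 * m) := by
      rw [← pow_add]
      congr 1
      omega
    simp only [hΦdef]
    show ‖-Complex.I * ((μ ^ (2*m) * η' : ℝ) : ℂ) +
          MvPolynomial.eval (evalPt hn (fun j => μ * ξ' j) (μ * τ')) (P₂ n ^ m)‖ ^ 2 +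
        (μ * τ') ^ 2 * ‖MvPolynomial.eval (evalPt hn (fun j => μ * ξ' j) (μ * τ')) Q1‖ ^ 2 +
        (μ * τ') ^ (2 * m) *
          ‖MvPolynomial.eval (evalPt hn (fun j => μ * ξ' j) (μ * τ')) Qm‖ ^ 2
      = μ ^ (4 * m) * (‖-Complex.I * (η' : ℂ) +
          MvPolynomial.eval (evalPt hn ξ' τ') (P₂ n ^ m)‖ ^ 2 +
        τ' ^ 2 * ‖MvPolynomial.eval (evalPt hn ξ' τ') Q1‖ ^ 2 +
        τ' ^ (2 * m) * ‖MvPolynomial.eval (evalPt hn ξ' τ') Qm‖ ^ 2)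
    have T1 : ‖-Complex.I * ((μ ^ (2*m) * η' : ℝ) : ℂ) +
          MvPolynomial.eval (evalPt hn (fun j => μ * ξ' j) (μ * τ')) (P₂ n ^ m)‖ ^ 2
        = μ ^ (4 * m) * ‖-Complex.I * (η' : ℂ) +
          MvPolynomial.eval (evalPt hn ξ' τ') (P₂ n ^ m)‖ ^ 2 := by
      rw [evalPt_mul hn ξ' τ' μ, homog_eval_scale hQ0h]
      have : -Complex.I * ((μ ^ (2*m) * η' : ℝ) : ℂ) +
          (μ : ℂ) ^ (2 * m) * MvPolynomial.eval (evalPt hn ξ' τ') (P₂ n ^ m)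
          = (μ : ℂ) ^ (2 * m) * (-Complex.I * (η' : ℂ) +
            MvPolynomial.eval (evalPt hn ξ' τ') (P₂ n ^ m)) := by
        push_cast
        ring
      rw [this, norm_mul, norm_pow, Complex.norm_real, Real.norm_of_nonneg hμ, mul_pow, key1]
    have T2 : (μ * τ') ^ 2 *
          ‖MvPolynomial.eval (evalPt hn (fun j => μ * ξ' j) (μ * τ')) Q1‖ ^ 2
        = μ ^ (4 * m) * (τ' ^ 2 * ‖MvPolynomial.eval (evalPt hn ξ' τ') Q1‖ ^ 2) := by
      rw [norm_eval_mul_of_homog hn hQ1h ξ' τ' μ hμ, mul_pow, mul_pow, ← pow_mul]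
      linear_combination (τ' ^ 2 * ‖MvPolynomial.eval (evalPt hn ξ' τ') Q1‖ ^ 2) * key2
    have T3 : (μ * τ') ^ (2 * m) *
          ‖MvPolynomial.eval (evalPt hn (fun j => μ * ξ' j) (μ * τ')) Qm‖ ^ 2
        = μ ^ (4 * m) * (τ' ^ (2 * m) * ‖MvPolynomial.eval (evalPt hn ξ' τ') Qm‖ ^ 2) := by
      rw [norm_eval_mul_of_homog hn hQmh ξ' τ' μ hμ, mul_pow, mul_pow, ← pow_mul]
      linear_combination (τ' ^ (2 * m) * ‖MvPolynomial.eval (evalPt hn ξ' τ') Qm‖ ^ 2) * key3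
    rw [T1, T2, T3]
    ring
  -- conclusion
  have hG0 : (0 : ℝ) ≤ η ^ 2 + ((∑ j, ξ j ^ 2) + τ ^ 2) ^ (2 * m) := by positivity
  suffices hsuf : Φ (τ, η, ξ) ≥ Φ pmin * (η ^ 2 + ((∑ j, ξ j ^ 2) + τ ^ 2) ^ (2 * m)) by
    simpa only [hΦdef] using hsuf
  rcases eq_or_lt_of_le hG0 with h0 | h0
  · rw [← h0, mul_zero]
    exact hΦ0 _
  · set GG := η ^ 2 + ((∑ j, ξ j ^ 2) + τ ^ 2) ^ (2 * m) with hGGdef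
    set μ := GG ^ ((4 * (m : ℝ))⁻¹) with hμdef
    have hμpos : 0 < μ := Real.rpow_pos_of_pos h0 _
    have hμ4m : μ ^ (4 * m) = GG := by
      have hmR : (0 : ℝ) < (m : ℝ) := by exact_mod_cast hm
      have h4 : (4 * (m : ℝ)) ≠ 0 := by nlinarith
      rw [hμdef, ← Real.rpow_natCast _ (4 * m), ← Real.rpow_mul h0.le]
      rw [show (((4 * m : ℕ) : ℝ)) = 4 * (m : ℝ) by push_cast; ring, inv_mul_cancel₀ h4]
      exact Real.rpow_one _
    clear_value GG μ
    have hback : (μ * (τ / μ), μ ^ (2 * m) * (η / μ ^ (2 * m)), fun j => μ * (ξ j / μ))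
        = ((τ, η, ξ) : ℝ × ℝ × (Fin n → ℝ)) := by
      have h1 : μ * (τ / μ) = τ := by field_simp
      have h2 : μ ^ (2 * m) * (η / μ ^ (2 * m)) = η := by
        field_simp
      have h3 : (fun j => μ * (ξ j / μ)) = ξ := by
        funext j
        field_simp
      rw [h1, h2, h3]
    have hΦs := hscaleΦ μ (τ / μ) (η / μ ^ (2 * m)) (fun j => ξ j / μ) hμpos.le
    rw [hback] at hΦs
    -- Ψ of the scaled point is 1
    have hΨ1 : Ψ (τ / μ, η / μ ^ (2 * m), fun j => ξ j / μ) = 1 := by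
      simp only [hΨdef]
      show (η / μ ^ (2 * m)) ^ 2 +
          ((∑ j, (ξ j / μ) ^ 2) + (τ / μ) ^ 2) ^ (2 * m) = 1
      have key1 : (μ ^ (2 * m)) ^ 2 = μ ^ (4 * m) := by
        rw [← pow_mul]; congr 1; omega
      have key2 : (μ ^ 2) ^ (2 * m) = μ ^ (4 * m) := by
        rw [← pow_mul]; congr 1; omega
      have hsum : (∑ j, (ξ j / μ) ^ 2) = (∑ j, ξ j ^ 2) / μ ^ 2 := by
        rw [Finset.sum_div]
        exact Finset.sum_congr rfl fun j _ => div_pow _ _ _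
      rw [hsum, div_pow, div_pow, ← add_div, div_pow, key1, key2, ← add_div]
      rw [← hGGdef, ← hμ4m]
      exact div_self (pow_ne_zero _ hμpos.ne')
    have hmem : (τ / μ, η / μ ^ (2 * m), fun j => ξ j / μ) ∈
        {p : ℝ × ℝ × (Fin n → ℝ) | Ψ p = 1} := hΨ1
    have hmin := hminOn hmem
    calc Φ (τ, η, ξ) = μ ^ (4 * m) * Φ (τ / μ, η / μ ^ (2 * m), fun j => ξ j / μ) := hΦs
      _ ≥ μ ^ (4 * m) * Φ pmin := by
          exact mul_le_mul_of_nonneg_left hmin (pow_nonneg hμpos.le _)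
      _ = Φ pmin * GG := by rw [hμ4m]; ring
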